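/- arXiv:2304.02141 — 2 statements merged into one kernel-verified Lean document; each statement's English description precedes it below -/
import Mathlib

section
/- Let N ≥ 1, let z_1,…,z_N be real numbers, and let Q_0 ≤ Q_1 be reals. Then there exist indices 0 ≤ τ_1 ≤ τ_2 ≤ N such that the rectangular sequence r with r_n = Q_0 for n ≤ τ_1, r_n = Q_1 for τ_1 < n ≤ τ_2, and r_n = Q_0 for n > τ_2 is feasible, unimodal, and minimizes the linear loss ∑_{n=1}^N z_n q_n over all feasible unimodal sequences q. -/
/-- `q` is feasible: each coordinate with index in `{1,…,N}` lies in `[Q0, Q1]`. -/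
def Feasible (Q0 Q1 : ℝ) (N : ℕ) (q : ℕ → ℝ) : Prop :=
  ∀ n, 1 ≤ n → n ≤ N → Q0 ≤ q n ∧ q n ≤ Q1

/-- `q` is nondecreasing on indices `{a,…,b}`. -/
def NondecOn (q : ℕ → ℝ) (a b : ℕ) : Prop :=
  ∀ i j, a ≤ i → i ≤ j → j ≤ b → q i ≤ q j

/-- `q` is nonincreasing on indices `{a,…,b}`. -/
def NonincOn (q : ℕ → ℝ) (a b : ℕ) : Prop :=
  ∀ i j, a ≤ i → i ≤ j → j ≤ b → q j ≤ q i

/-- `q` is unimodal on `{1,…,N}`. -/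
def UnimodalOn (N : ℕ) (q : ℕ → ℝ) : Prop :=
  ∃ p, 1 ≤ p ∧ p ≤ N ∧ NondecOn q 1 p ∧ NonincOn q p N

/-- Linear loss `∑_{n=1}^N z_n q_n`. -/
noncomputable def linLoss (z q : ℕ → ℝ) (N : ℕ) : ℝ :=
  ∑ n ∈ Finset.Icc 1 N, z n * q n

/-- The rectangular sequence: `Q0` for `n ≤ τ1`, `Q1` for `τ1 < n ≤ τ2`, `Q0` for `n > τ2`. -/
def rectSeq (Q0 Q1 : ℝ) (τ1 τ2 : ℕ) : ℕ → ℝ :=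
  fun n => if n ≤ τ1 then Q0 else if n ≤ τ2 then Q1 else Q0

private lemma sum_Icc_left (a b : ℕ) (h : a ≤ b) (f : ℕ → ℝ) :
    ∑ n ∈ Finset.Icc a b, f n = f a + ∑ n ∈ Finset.Icc (a+1) b, f n := by
  rw [Finset.Icc_add_one_left_eq_Ioc, ← Finset.sum_insert (by simp), Finset.Ioc_insert_left h]

private lemma sum_Icc_right (a b : ℕ) (h1 : 1 ≤ a) (h : a ≤ b) (f : ℕ → ℝ) :
    ∑ n ∈ Finset.Icc a b, f n = (∑ n ∈ Finset.Icc a (b-1), f n) + f b := by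
  obtain ⟨c, rfl⟩ : ∃ c, b = a + c := ⟨b - a, by omega⟩
  cases c with
  | zero =>
      rw [Finset.Icc_eq_empty (by omega : ¬ a ≤ a + 0 - 1)]
      simp
  | succ c =>
      have : a + (c+1) - 1 = a + c := by omega
      rw [this, show a + (c+1) = (a+c)+1 by omega, Finset.sum_Icc_succ_top (by omega)]

/-- Key lemma: lower bound for the weighted sum of a nonnegative unimodal sequence. -/
private lemma key (z : ℕ → ℝ) (N : ℕ) (m : ℝ)
    (hm0 : m ≤ 0)
    (hm : ∀ u v, u ≤ v → v ≤ N → m ≤ ∑ n ∈ Finset.Icc (u+1) v, z n) :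
    ∀ k a b, b - a = k → a ≤ b → b ≤ N →
    ∀ (C : ℝ) (s : ℕ → ℝ), 0 ≤ C →
    (∀ n, a+1 ≤ n → n ≤ b → 0 ≤ s n ∧ s n ≤ C) →
    (a = b ∨ ∃ p, a+1 ≤ p ∧ p ≤ b ∧ NondecOn s (a+1) p ∧ NonincOn s p b) →
    C * m ≤ ∑ n ∈ Finset.Icc (a+1) b, z n * s n := by
  intro k
  induction k with
  | zero =>
    intro a b hk hab hbN C s hC _ _
    have : a = b := by omega
    subst this
    rw [show Finset.Icc (a+1) a = ∅ by rw [Finset.Icc_eq_empty]; omega]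
    simpa using mul_nonpos_of_nonneg_of_nonpos hC hm0
  | succ k ih =>
    intro a b hk hab hbN C s hC hbound huni
    have hab' : a < b := by omega
    obtain ⟨p, hp1, hp2, hnd, hni⟩ := huni.resolve_left (by omega)
    set c : ℝ := min (s (a+1)) (s b) with hc
    have hc0 : 0 ≤ c := le_min (hbound (a+1) le_rfl (by omega)).1 (hbound b (by omega) le_rfl).1
    have hcC : c ≤ C := le_trans (min_le_left _ _) (hbound (a+1) le_rfl (by omega)).2
    have hcle : ∀ n, a+1 ≤ n → n ≤ b → c ≤ s n := by
      intro n h1 h2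
      rcases le_total n p with h | h
      · exact le_trans (min_le_left _ _) (hnd (a+1) n le_rfl h1 h)
      · exact le_trans (min_le_right _ _) (hni n b h (by omega) le_rfl)
    set s' : ℕ → ℝ := fun n => s n - c with hs'
    have hZ : m ≤ ∑ n ∈ Finset.Icc (a+1) b, z n := hm a b hab hbN
    have hsplit : ∑ n ∈ Finset.Icc (a+1) b, z n * s n
        = (∑ n ∈ Finset.Icc (a+1) b, z n * s' n) + c * ∑ n ∈ Finset.Icc (a+1) b, z n := by
      rw [Finset.mul_sum, ← Finset.sum_add_distrib]
      apply Finset.sum_congr rfl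
      intro n _
      simp only [hs']
      ring
    rcases le_total (s (a+1)) (s b) with hcase | hcase
    · -- c = s (a+1), peel off the left endpoint
      have hca : c = s (a+1) := min_eq_left hcase
      rcases eq_or_lt_of_le hp1 with hpeq | hplt
      · -- p = a+1 : s' is identically 0
        have hzero : ∀ n ∈ Finset.Icc (a+1) b, z n * s' n = 0 := by
          intro n hn
          simp only [Finset.mem_Icc] at hn
          have h1 : s n ≤ s (a+1) := hni (a+1) n hpeq.ge hn.1 hn.2
          have h2 : c ≤ s n := hcle n hn.1 hn.2
          have : s' n = 0 := by simp only [hs']; rw [hca] at h2 ⊢; linarith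
          simp [this]
        rw [hsplit, Finset.sum_eq_zero hzero]
        have h1 : c * m ≤ c * ∑ n ∈ Finset.Icc (a+1) b, z n := mul_le_mul_of_nonneg_left hZ hc0
        nlinarith
      · -- p ≥ a+2 : recurse on (a+1, b]
        have hrec : (C - c) * m ≤ ∑ n ∈ Finset.Icc ((a+1)+1) b, z n * s' n := by
          have e1 : b - (a+1) = k := by rw [← Nat.sub_sub, hk]; exact Nat.add_sub_cancel _ _
          have e2 : a+1 ≤ b := hab'
          apply ih (a+1) b e1 e2 hbN (C - c) s' (by linarith)
          · intro n h1 h2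
            refine ⟨?_, ?_⟩
            · have := hcle n (by omega) h2; simp only [hs']; linarith
            · have := (hbound n (by omega) h2).2; simp only [hs']; linarith
          · right
            exact ⟨p, by omega, hp2,
              fun i j hi hij hj => by simp only [hs']; linarith [hnd i j (by omega) hij hj],
              fun i j hi hij hj => by simp only [hs']; linarith [hni i j hi hij hj]⟩
        have hsum : ∑ n ∈ Finset.Icc (a+1) b, z n * s' n
            = ∑ n ∈ Finset.Icc ((a+1)+1) b, z n * s' n := by
          rw [sum_Icc_left (a+1) b (by omega)]
          have h0 : s' (a+1) = 0 := by simp only [hs']; rw [hca]; ring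
          rw [h0]; ring
        rw [hsplit, hsum]
        have h1 : c * m ≤ c * ∑ n ∈ Finset.Icc (a+1) b, z n := mul_le_mul_of_nonneg_left hZ hc0
        nlinarith
    · -- c = s b, peel off the right endpoint
      have hcb : c = s b := min_eq_right hcase
      rcases eq_or_lt_of_le hp2 with hpeq | hplt
      · -- p = b : s' is identically 0
        have hzero : ∀ n ∈ Finset.Icc (a+1) b, z n * s' n = 0 := by
          intro n hn
          simp only [Finset.mem_Icc] at hn
          have h1 : s n ≤ s b := by
            have := hnd n p hn.1 (by omega) le_rfl
            rwa [hpeq] at this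
          have h2 : c ≤ s n := hcle n hn.1 hn.2
          have : s' n = 0 := by simp only [hs']; rw [hcb] at h2 ⊢; linarith
          simp [this]
        rw [hsplit, Finset.sum_eq_zero hzero]
        have h1 : c * m ≤ c * ∑ n ∈ Finset.Icc (a+1) b, z n := mul_le_mul_of_nonneg_left hZ hc0
        nlinarith
      · -- p ≤ b-1 : recurse on (a, b-1]
        have hrec : (C - c) * m ≤ ∑ n ∈ Finset.Icc (a+1) (b-1), z n * s' n := by
          have e1 : b - 1 - a = k := by rw [Nat.sub_right_comm, hk]; exact Nat.add_sub_cancel _ _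
          have e2 : a ≤ b - 1 := by omega
          have e3 : b - 1 ≤ N := le_trans (Nat.sub_le b 1) hbN
          apply ih a (b-1) e1 e2 e3 (C - c) s' (by linarith)
          · intro n h1 h2
            refine ⟨?_, ?_⟩
            · have := hcle n h1 (by omega); simp only [hs']; linarith
            · have := (hbound n h1 (by omega)).2; simp only [hs']; linarith
          · right
            exact ⟨p, hp1, by omega,
              fun i j hi hij hj => by simp only [hs']; linarith [hnd i j hi hij hj],
              fun i j hi hij hj => by simp only [hs']; linarith [hni i j hi hij (by omega)]⟩
        have hsum : ∑ n ∈ Finset.Icc (a+1) b, z n * s' n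
            = ∑ n ∈ Finset.Icc (a+1) (b-1), z n * s' n := by
          rw [sum_Icc_right (a+1) b (by omega) (by omega)]
          have h0 : s' b = 0 := by simp only [hs']; rw [hcb]; ring
          rw [h0]; ring
        rw [hsplit, hsum]
        have h1 : c * m ≤ c * ∑ n ∈ Finset.Icc (a+1) b, z n := mul_le_mul_of_nonneg_left hZ hc0
        nlinarith

private lemma rect_loss (z : ℕ → ℝ) (N : ℕ) (Q0 Q1 : ℝ) (τ1 τ2 : ℕ)
    (h12 : τ1 ≤ τ2) (h2N : τ2 ≤ N) :
    linLoss z (rectSeq Q0 Q1 τ1 τ2) N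
      = (∑ n ∈ Finset.Icc 1 N, z n * Q0)
        + (Q1 - Q0) * ∑ n ∈ Finset.Icc (τ1+1) τ2, z n := by
  unfold linLoss
  have hsub : Finset.Icc (τ1+1) τ2 ⊆ Finset.Icc 1 N := by
    intro n hn; simp only [Finset.mem_Icc] at *; omega
  have hind : ∑ n ∈ Finset.Icc 1 N,
      (if n ∈ Finset.Icc (τ1+1) τ2 then (Q1 - Q0) * z n else 0)
      = ∑ n ∈ Finset.Icc (τ1+1) τ2, (Q1 - Q0) * z n := by
    rw [Finset.sum_ite_mem, Finset.inter_eq_right.mpr hsub]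
  rw [Finset.mul_sum]
  calc ∑ n ∈ Finset.Icc 1 N, z n * rectSeq Q0 Q1 τ1 τ2 n
      = ∑ n ∈ Finset.Icc 1 N,
          (z n * Q0 + if n ∈ Finset.Icc (τ1+1) τ2 then (Q1 - Q0) * z n else 0) := by
        apply Finset.sum_congr rfl
        intro n hn
        simp only [Finset.mem_Icc, rectSeq]
        split_ifs with h1 h2 h3 <;> simp only [Finset.mem_Icc] at * <;>
          first | ring1 | (exfalso; omega)
    _ = (∑ n ∈ Finset.Icc 1 N, z n * Q0) + ∑ n ∈ Finset.Icc (τ1+1) τ2, (Q1 - Q0) * z n := by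
        rw [Finset.sum_add_distrib, hind]

/-- there exist thresholds `0 ≤ τ1 ≤ τ2 ≤ N` such that the corresponding
rectangular sequence is feasible, unimodal, and minimizes the linear loss over all
feasible unimodal sequences. -/
theorem stmt5 (N : ℕ) (hN : 1 ≤ N) (z : ℕ → ℝ) (Q0 Q1 : ℝ) (hQ : Q0 ≤ Q1) :
    ∃ τ1 τ2 : ℕ, τ1 ≤ τ2 ∧ τ2 ≤ N ∧
      Feasible Q0 Q1 N (rectSeq Q0 Q1 τ1 τ2) ∧
      UnimodalOn N (rectSeq Q0 Q1 τ1 τ2) ∧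
      ∀ q : ℕ → ℝ, Feasible Q0 Q1 N q → UnimodalOn N q →
        linLoss z (rectSeq Q0 Q1 τ1 τ2) N ≤ linLoss z q N := by
  -- choose the interval `(τ1, τ2]` minimizing `∑ z` over all intervals in `(0, N]`
  set F : Finset (ℕ × ℕ) :=
    (Finset.Icc 0 N ×ˢ Finset.Icc 0 N).filter (fun p => p.1 ≤ p.2) with hF
  have hne : F.Nonempty := ⟨(0, 0), by simp [hF]⟩
  obtain ⟨t, htF, htmin⟩ := F.exists_min_image (fun p => ∑ n ∈ Finset.Icc (p.1+1) p.2, z n) hne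
  obtain ⟨τ1, τ2⟩ := t
  simp only [hF, Finset.mem_filter, Finset.mem_product, Finset.mem_Icc] at htF
  have h12 : τ1 ≤ τ2 := htF.2
  have h2N : τ2 ≤ N := htF.1.2.2
  set m : ℝ := ∑ n ∈ Finset.Icc (τ1+1) τ2, z n with hmdef
  have hm0 : m ≤ 0 := by
    have := htmin (0, 0) (by simp [hF])
    simpa [hmdef] using this
  have hm : ∀ u v, u ≤ v → v ≤ N → m ≤ ∑ n ∈ Finset.Icc (u+1) v, z n := by
    intro u v huv hvN
    exact htmin (u, v) (by simp [hF]; omega)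
  refine ⟨τ1, τ2, h12, h2N, ?_, ?_, ?_⟩
  · -- feasibility
    intro n h1 h2
    unfold rectSeq
    split_ifs <;> first | exact ⟨le_rfl, hQ⟩ | exact ⟨hQ, le_rfl⟩
  · -- unimodal
    rcases eq_or_lt_of_le h12 with heq | hlt
    · refine ⟨1, le_rfl, hN, ?_, ?_⟩
      · intro i j hi hij hj
        unfold rectSeq; subst heq
        split_ifs <;> first | exact le_rfl | exact hQ | (exfalso; omega)
      · intro i j hi hij hj
        unfold rectSeq; subst heq
        split_ifs <;> first | exact le_rfl | exact hQ | (exfalso; omega)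
    · refine ⟨τ2, by omega, h2N, ?_, ?_⟩
      · intro i j hi hij hj
        unfold rectSeq
        split_ifs <;> first | exact le_rfl | exact hQ | (exfalso; omega)
      · intro i j hi hij hj
        unfold rectSeq
        split_ifs <;> first | exact le_rfl | exact hQ | (exfalso; omega)
  · -- optimality
    intro q hfeas huni
    obtain ⟨p, hp1, hpN, hnd, hni⟩ := huni
    set s : ℕ → ℝ := fun n => q n - Q0 with hs
    have hkey : (Q1 - Q0) * m ≤ ∑ n ∈ Finset.Icc (0+1) N, z n * s n := by
      apply key z N m hm0 hm N 0 N (by omega) (by omega) le_rfl (Q1 - Q0) s (by linarith)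
      · intro n h1 h2
        have := hfeas n (by omega) h2
        constructor <;> simp only [hs] <;> linarith [this.1, this.2]
      · right
        exact ⟨p, by omega, hpN,
          fun i j hi hij hj => by simp only [hs]; linarith [hnd i j hi hij hj],
          fun i j hi hij hj => by simp only [hs]; linarith [hni i j hi hij hj]⟩
    have hq : linLoss z q N
        = (∑ n ∈ Finset.Icc 1 N, z n * Q0) + ∑ n ∈ Finset.Icc (0+1) N, z n * s n := by
      unfold linLoss
      rw [← Finset.sum_add_distrib]
      apply Finset.sum_congr (by norm_num)
      intro n _
      simp only [hs]
      ring
    rw [rect_loss z N Q0 Q1 τ1 τ2 h12 h2N, hq]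
    linarith
end

section
/- Let N ≥ 1, let z_1,…,z_N be real numbers, and let Q_0 ≤ Q_1 be reals. Then the minimum of the linear loss ∑_{n=1}^N z_n q_n over all feasible unimodal sequences q equals min over 0 ≤ τ_1 ≤ τ_2 ≤ N of L_{τ_1,τ_2} := Q_0 ∑_{n=1}^{τ_1} z_n + Q_1 ∑_{n=τ_1+1}^{τ_2} z_n + Q_0 ∑_{n=τ_2+1}^{N} z_n. -/
/-- Rectangular loss `L_{τ1,τ2} = Q0 ∑_{n=1}^{τ1} z_n + Q1 ∑_{n=τ1+1}^{τ2} z_n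
  + Q0 ∑_{n=τ2+1}^{N} z_n`. -/
noncomputable def rectLoss (z : ℕ → ℝ) (Q0 Q1 : ℝ) (N τ1 τ2 : ℕ) : ℝ :=
  Q0 * ∑ n ∈ Finset.Icc 1 τ1, z n + Q1 * ∑ n ∈ Finset.Icc (τ1 + 1) τ2, z n
    + Q0 * ∑ n ∈ Finset.Icc (τ2 + 1) N, z n

lemma rect_eq (z : ℕ → ℝ) (Q0 Q1 : ℝ) (N a b : ℕ) (hab : a ≤ b) (hbN : b ≤ N) :
    rectLoss z Q0 Q1 N a b
      = Q0 * ∑ n ∈ Finset.Icc 1 N, z n + (Q1 - Q0) * ∑ n ∈ Finset.Icc (a+1) b, z n := by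
  have h1 : Finset.Icc 1 N = Finset.Ioc 0 N := Finset.Icc_add_one_left_eq_Ioc 0 N
  have h2 : Finset.Icc (a+1) b = Finset.Ioc a b := Finset.Icc_add_one_left_eq_Ioc a b
  have h3 : Finset.Icc (b+1) N = Finset.Ioc b N := Finset.Icc_add_one_left_eq_Ioc b N
  have h4 : Finset.Icc 1 a = Finset.Ioc 0 a := Finset.Icc_add_one_left_eq_Ioc 0 a
  have hsplit : ((∑ n ∈ Finset.Ioc 0 a, z n) + ∑ n ∈ Finset.Ioc a b, z n)
      + ∑ n ∈ Finset.Ioc b N, z n = ∑ n ∈ Finset.Ioc 0 N, z n := by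
    rw [Finset.sum_Ioc_consecutive _ (Nat.zero_le a) hab,
        Finset.sum_Ioc_consecutive _ (Nat.zero_le b) hbN]
  rw [rectLoss, h1, h2, h3, h4]
  linear_combination Q0 * hsplit

lemma key_s6 (N : ℕ) (z : ℕ → ℝ) (c : ℝ)
    (hc : ∀ a b : ℕ, a ≤ b → b ≤ N → c ≤ ∑ n ∈ Finset.Icc (a+1) b, z n) :
    ∀ k : ℕ, ∀ D : ℝ, ∀ r : ℕ → ℝ, 0 ≤ D →
      ((Finset.Icc 1 N).filter (fun n => r n ≠ 0)).card ≤ k →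
      (∀ n, 1 ≤ n → n ≤ N → 0 ≤ r n ∧ r n ≤ D) →
      (∃ p, 1 ≤ p ∧ p ≤ N ∧ NondecOn r 1 p ∧ NonincOn r p N) →
      D * c ≤ ∑ n ∈ Finset.Icc 1 N, z n * r n := by
  have hc0 : c ≤ 0 := by simpa using hc 0 0 le_rfl (Nat.zero_le N)
  have zerocase : ∀ (D : ℝ) (r : ℕ → ℝ), 0 ≤ D →
      ((Finset.Icc 1 N).filter (fun n => r n ≠ 0)).card = 0 →
      D * c ≤ ∑ n ∈ Finset.Icc 1 N, z n * r n := by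
    intro D r hD hcard
    have hz : ∀ n ∈ Finset.Icc 1 N, r n = 0 := by
      intro n hn
      by_contra h
      have hmem : n ∈ (Finset.Icc 1 N).filter (fun n => r n ≠ 0) :=
        Finset.mem_filter.mpr ⟨hn, h⟩
      have := Finset.card_pos.mpr ⟨n, hmem⟩
      omega
    have hs : ∑ n ∈ Finset.Icc 1 N, z n * r n = 0 :=
      Finset.sum_eq_zero (by intro n hn; rw [hz n hn, mul_zero])
    rw [hs]
    exact mul_nonpos_iff.mpr (Or.inl ⟨hD, hc0⟩)
  intro k
  induction k with
  | zero =>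
    intro D r hD hcard hbd _
    exact zerocase D r hD (Nat.le_zero.mp hcard)
  | succ k ih =>
    intro D r hD hcard hbd huni
    obtain ⟨p, hp1, hpN, hup, hdown⟩ := huni
    set S := (Finset.Icc 1 N).filter (fun n => r n ≠ 0) with hSdef
    by_cases hSne : S.Nonempty
    · obtain ⟨n0, hn0S, hn0min⟩ := S.exists_min_image r hSne
      set a := S.min' hSne with hadef
      set b := S.max' hSne with hbdef
      have haS : a ∈ S := S.min'_mem hSne
      have hbS : b ∈ S := S.max'_mem hSne
      have hmemS : ∀ n ∈ S, 1 ≤ n ∧ n ≤ N ∧ r n ≠ 0 := by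
        intro n hn
        have := Finset.mem_filter.mp hn
        have h2 := Finset.mem_Icc.mp this.1
        exact ⟨h2.1, h2.2, this.2⟩
      have h1a : 1 ≤ a := (hmemS a haS).1
      have hbN' : b ≤ N := (hmemS b hbS).2.1
      have han0 : a ≤ n0 := S.min'_le n0 hn0S
      have hn0b : n0 ≤ b := S.le_max' n0 hn0S
      set t := r n0 with htdef
      have ht0 : 0 < t := by
        have h := hmemS n0 hn0S
        have := (hbd n0 h.1 h.2.1).1
        rcases lt_or_eq_of_le this with h' | h'
        · exact h'
        · exact absurd h'.symm h.2.2
      have htD : t ≤ D := by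
        have h := hmemS n0 hn0S
        exact (hbd n0 h.1 h.2.1).2
      -- every index in [a,b] has r n ≥ t
      have hint : ∀ n, a ≤ n → n ≤ b → t ≤ r n := by
        intro n han hnb
        by_cases hnp : n ≤ p
        · have := hup a n h1a han hnp
          have := hn0min a haS
          linarith
        · have hpn : p ≤ n := le_of_not_ge hnp
          have := hdown n b hpn hnb hbN'
          have := hn0min b hbS
          linarith
      have hout : ∀ n, 1 ≤ n → n ≤ N → ¬(a ≤ n ∧ n ≤ b) → r n = 0 := by
        intro n h1 h2 hno
        by_contra h
        have hnS : n ∈ S := Finset.mem_filter.mpr ⟨Finset.mem_Icc.mpr ⟨h1, h2⟩, h⟩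
        exact hno ⟨S.min'_le n hnS, S.le_max' n hnS⟩
      set r' : ℕ → ℝ := fun n => if a ≤ n ∧ n ≤ b then r n - t else r n with hr'def
      have hr'eq : ∀ n, r' n = if a ≤ n ∧ n ≤ b then r n - t else r n := fun n => rfl
      -- bounds for r'
      have hbd' : ∀ n, 1 ≤ n → n ≤ N → 0 ≤ r' n ∧ r' n ≤ D - t := by
        intro n h1 h2
        rw [hr'eq]
        by_cases h : a ≤ n ∧ n ≤ b
        · rw [if_pos h]
          have := hint n h.1 h.2
          have := (hbd n h1 h2).2
          constructor <;> linarith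
        · rw [if_neg h]
          rw [hout n h1 h2 h]
          constructor <;> linarith
      -- support shrinks
      have hcard' : ((Finset.Icc 1 N).filter (fun n => r' n ≠ 0)).card ≤ k := by
        have hsub : (Finset.Icc 1 N).filter (fun n => r' n ≠ 0) ⊆ S.erase n0 := by
          intro n hn
          obtain ⟨hnIcc, hnne⟩ := Finset.mem_filter.mp hn
          have h2 := Finset.mem_Icc.mp hnIcc
          by_cases h : a ≤ n ∧ n ≤ b
          · have hne0 : n ≠ n0 := by
              intro he
              apply hnne
              rw [hr'eq, if_pos h, he]
              ring
            have hrn : r n ≠ 0 := by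
              have := hint n h.1 h.2
              intro he; rw [he] at this; linarith
            exact Finset.mem_erase.mpr ⟨hne0, Finset.mem_filter.mpr ⟨hnIcc, hrn⟩⟩
          · exfalso
            apply hnne
            rw [hr'eq, if_neg h]
            exact hout n h2.1 h2.2 h
        have h1 := Finset.card_le_card hsub
        have h2 := Finset.card_erase_of_mem hn0S
        have h3 : S.card ≤ k + 1 := hcard
        omega
      -- unimodality of r'
      have hup' : NondecOn r' 1 p := by
        intro i j h1i hij hjp
        have hjN : j ≤ N := le_trans hjp hpN
        have hiN : i ≤ N := le_trans hij hjN
        have h1j : 1 ≤ j := le_trans h1i hij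
        rw [hr'eq, hr'eq]
        by_cases hi : a ≤ i ∧ i ≤ b <;> by_cases hj : a ≤ j ∧ j ≤ b
        · rw [if_pos hi, if_pos hj]
          have := hup i j h1i hij hjp
          linarith
        · exfalso
          have hrj : r j = 0 := hout j h1j hjN hj
          have h1 := hup i j h1i hij hjp
          have h2 := hint i hi.1 hi.2
          linarith
        · rw [if_neg hi, if_pos hj]
          have hia : ¬(a ≤ i) := by omega
          have hri : r i = 0 := hout i h1i hiN (by omega)
          have := hint j hj.1 hj.2
          linarith
        · rw [if_neg hi, if_neg hj]
          exact hup i j h1i hij hjp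
      have hdown' : NonincOn r' p N := by
        intro i j hpi hij hjN
        have h1i : 1 ≤ i := le_trans hp1 hpi
        have h1j : 1 ≤ j := le_trans h1i hij
        have hiN : i ≤ N := le_trans hij hjN
        rw [hr'eq, hr'eq]
        by_cases hi : a ≤ i ∧ i ≤ b <;> by_cases hj : a ≤ j ∧ j ≤ b
        · rw [if_pos hi, if_pos hj]
          have := hdown i j hpi hij hjN
          linarith
        · rw [if_pos hi, if_neg hj]
          have hrj : r j = 0 := hout j h1j hjN hj
          have := hint i hi.1 hi.2
          linarith
        · exfalso
          have hri : r i = 0 := hout i h1i hiN hi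
          have h1 := hdown i j hpi hij hjN
          have h2 := hint j hj.1 hj.2
          linarith
        · rw [if_neg hi, if_neg hj]
          exact hdown i j hpi hij hjN
      -- sum identity
      have hsubIcc : Finset.Icc a b ⊆ Finset.Icc 1 N := Finset.Icc_subset_Icc h1a hbN'
      have hsum : ∑ n ∈ Finset.Icc 1 N, z n * r n
          = (∑ n ∈ Finset.Icc 1 N, z n * r' n) + t * ∑ n ∈ Finset.Icc a b, z n := by
        have hterm : ∀ n ∈ Finset.Icc 1 N, z n * r n
            = z n * r' n + (if n ∈ Finset.Icc a b then z n * t else 0) := by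
          intro n hn
          rw [hr'eq]
          by_cases h : a ≤ n ∧ n ≤ b
          · rw [if_pos h, if_pos (Finset.mem_Icc.mpr h)]; ring
          · rw [if_neg h, if_neg (fun hm => h (Finset.mem_Icc.mp hm))]; ring
        rw [Finset.sum_congr rfl hterm, Finset.sum_add_distrib, Finset.sum_ite_mem,
            Finset.inter_eq_right.mpr hsubIcc]
        congr 1
        rw [← Finset.sum_mul, mul_comm]
      have hIH : (D - t) * c ≤ ∑ n ∈ Finset.Icc 1 N, z n * r' n :=
        ih (D - t) r' (by linarith) hcard' hbd' ⟨p, hp1, hpN, hup', hdown'⟩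
      have hintsum : c ≤ ∑ n ∈ Finset.Icc a b, z n := by
        have h := hc (a - 1) b (by omega) hbN'
        have he : a - 1 + 1 = a := by omega
        rwa [he] at h
      have h2 : t * c ≤ t * ∑ n ∈ Finset.Icc a b, z n :=
        mul_le_mul_of_nonneg_left hintsum (le_of_lt ht0)
      have hexp : D * c = (D - t) * c + t * c := by ring
      linarith
    · have : S.card = 0 := by
        rw [Finset.card_eq_zero]
        exact Finset.not_nonempty_iff_eq_empty.mp hSne
      exact zerocase D r hD this

lemma step_exists (z : ℕ → ℝ) (Q0 Q1 : ℝ) (hQ : Q0 ≤ Q1) (N a b : ℕ) (hN : 1 ≤ N)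
    (hab : a ≤ b) (hbN : b ≤ N) :
    ∃ q : ℕ → ℝ, Feasible Q0 Q1 N q ∧ UnimodalOn N q ∧
      linLoss z q N = rectLoss z Q0 Q1 N a b := by
  set q : ℕ → ℝ := fun n => if a + 1 ≤ n ∧ n ≤ b then Q1 else Q0 with hqdef
  have hqeq : ∀ n, q n = if a + 1 ≤ n ∧ n ≤ b then Q1 else Q0 := fun n => rfl
  refine ⟨q, ?_, ?_, ?_⟩
  · intro n h1 h2
    rw [hqeq]
    by_cases h : a + 1 ≤ n ∧ n ≤ b
    · rw [if_pos h]; exact ⟨hQ, le_rfl⟩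
    · rw [if_neg h]; exact ⟨le_rfl, hQ⟩
  · by_cases hab' : a < b
    · refine ⟨a + 1, by omega, by omega, ?_, ?_⟩
      · intro i j h1i hij hja
        rw [hqeq, hqeq]
        by_cases hi : a + 1 ≤ i ∧ i ≤ b <;> by_cases hj : a + 1 ≤ j ∧ j ≤ b
        · rw [if_pos hi, if_pos hj]
        · omega
        · rw [if_neg hi, if_pos hj]; exact hQ
        · rw [if_neg hi, if_neg hj]
      · intro i j hpi hij hjN
        rw [hqeq, hqeq]
        by_cases hi : a + 1 ≤ i ∧ i ≤ b <;> by_cases hj : a + 1 ≤ j ∧ j ≤ b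
        · rw [if_pos hi, if_pos hj]
        · rw [if_pos hi, if_neg hj]; exact hQ
        · omega
        · rw [if_neg hi, if_neg hj]
    · have hab2 : a = b := by omega
      refine ⟨1, le_rfl, hN, ?_, ?_⟩
      · intro i j h1i hij hj1
        have : i = j := by omega
        rw [this]
      · intro i j hpi hij hjN
        rw [hqeq, hqeq, if_neg (by omega), if_neg (by omega)]
  · rw [linLoss, rect_eq z Q0 Q1 N a b hab hbN]
    have h1 : Finset.Icc 1 N = Finset.Ioc 0 N := Finset.Icc_add_one_left_eq_Ioc 0 N
    have h2 : Finset.Icc (a+1) b = Finset.Ioc a b := Finset.Icc_add_one_left_eq_Ioc a b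
    have hsplit : ((∑ n ∈ Finset.Ioc 0 a, z n * q n) + ∑ n ∈ Finset.Ioc a b, z n * q n)
        + ∑ n ∈ Finset.Ioc b N, z n * q n = ∑ n ∈ Finset.Ioc 0 N, z n * q n := by
      rw [Finset.sum_Ioc_consecutive _ (Nat.zero_le a) hab,
          Finset.sum_Ioc_consecutive _ (Nat.zero_le b) hbN]
    have e1 : ∑ n ∈ Finset.Ioc 0 a, z n * q n = Q0 * ∑ n ∈ Finset.Ioc 0 a, z n := by
      rw [Finset.mul_sum]
      refine Finset.sum_congr rfl ?_
      intro n hn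
      have := Finset.mem_Ioc.mp hn
      rw [hqeq, if_neg (by omega)]; ring
    have e2 : ∑ n ∈ Finset.Ioc a b, z n * q n = Q1 * ∑ n ∈ Finset.Ioc a b, z n := by
      rw [Finset.mul_sum]
      refine Finset.sum_congr rfl ?_
      intro n hn
      have := Finset.mem_Ioc.mp hn
      rw [hqeq, if_pos (by omega)]; ring
    have e3 : ∑ n ∈ Finset.Ioc b N, z n * q n = Q0 * ∑ n ∈ Finset.Ioc b N, z n := by
      rw [Finset.mul_sum]
      refine Finset.sum_congr rfl ?_
      intro n hn
      have := Finset.mem_Ioc.mp hn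
      rw [hqeq, if_neg (by omega)]; ring
    have hzsplit : ((∑ n ∈ Finset.Ioc 0 a, z n) + ∑ n ∈ Finset.Ioc a b, z n)
        + ∑ n ∈ Finset.Ioc b N, z n = ∑ n ∈ Finset.Ioc 0 N, z n := by
      rw [Finset.sum_Ioc_consecutive _ (Nat.zero_le a) hab,
          Finset.sum_Ioc_consecutive _ (Nat.zero_le b) hbN]
    rw [h1, h2, ← hsplit, e1, e2, e3]
    linear_combination Q0 * hzsplit

/-- the minimum of the linear loss over all feasible unimodal sequences
equals the minimum of the rectangular losses `L_{τ1,τ2}` over `0 ≤ τ1 ≤ τ2 ≤ N`;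
both minima are attained and coincide. -/
theorem stmt6 (N : ℕ) (hN : 1 ≤ N) (z : ℕ → ℝ) (Q0 Q1 : ℝ) (hQ : Q0 ≤ Q1) :
    ∃ m : ℝ,
      IsLeast {L : ℝ | ∃ q : ℕ → ℝ, Feasible Q0 Q1 N q ∧ UnimodalOn N q ∧
        L = linLoss z q N} m ∧
      IsLeast {L : ℝ | ∃ τ1 τ2 : ℕ, τ1 ≤ τ2 ∧ τ2 ≤ N ∧
        L = rectLoss z Q0 Q1 N τ1 τ2} m := by
  classical
  set T : Finset (ℕ × ℕ) :=
    (Finset.range (N+1) ×ˢ Finset.range (N+1)).filter (fun pr => pr.1 ≤ pr.2) with hT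
  have hTmem : ∀ pr : ℕ × ℕ, pr ∈ T ↔ (pr.1 ≤ pr.2 ∧ pr.2 ≤ N) := by
    intro pr
    simp only [hT, Finset.mem_filter, Finset.mem_product, Finset.mem_range]
    omega
  set F := T.image (fun pr : ℕ × ℕ => ∑ n ∈ Finset.Icc (pr.1+1) pr.2, z n) with hF
  have hFne : F.Nonempty :=
    ⟨_, Finset.mem_image.mpr ⟨(0,0), (hTmem _).mpr ⟨le_rfl, Nat.zero_le N⟩, rfl⟩⟩
  set c := F.min' hFne with hcdef
  have hc : ∀ a b : ℕ, a ≤ b → b ≤ N → c ≤ ∑ n ∈ Finset.Icc (a+1) b, z n := by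
    intro a b h1 h2
    exact F.min'_le _ (Finset.mem_image.mpr ⟨(a,b), (hTmem _).mpr ⟨h1, h2⟩, rfl⟩)
  obtain ⟨pr0, hpr0T, hpr0⟩ := Finset.mem_image.mp (F.min'_mem hFne)
  obtain ⟨h01, h02⟩ := (hTmem pr0).mp hpr0T
  set m := Q0 * ∑ n ∈ Finset.Icc 1 N, z n + (Q1 - Q0) * c with hm
  have hD : (0:ℝ) ≤ Q1 - Q0 := by linarith
  have hrect0 : rectLoss z Q0 Q1 N pr0.1 pr0.2 = m := by
    rw [rect_eq z Q0 Q1 N pr0.1 pr0.2 h01 h02, hm, hpr0]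
  refine ⟨m, ⟨?_, ?_⟩, ⟨?_, ?_⟩⟩
  · obtain ⟨q, hfeas, huni, hlin⟩ := step_exists z Q0 Q1 hQ N pr0.1 pr0.2 hN h01 h02
    exact ⟨q, hfeas, huni, by rw [hlin, hrect0]⟩
  · rintro L ⟨q, hfeas, ⟨p, hp1, hpN, hup, hdown⟩, rfl⟩
    have hbd : ∀ n, 1 ≤ n → n ≤ N → 0 ≤ q n - Q0 ∧ q n - Q0 ≤ Q1 - Q0 := by
      intro n h1 h2
      have := hfeas n h1 h2
      constructor <;> linarith [this.1, this.2]
    have hup' : NondecOn (fun n => q n - Q0) 1 p := by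
      intro i j h1 h2 h3
      have := hup i j h1 h2 h3
      show q i - Q0 ≤ q j - Q0
      linarith
    have hdown' : NonincOn (fun n => q n - Q0) p N := by
      intro i j h1 h2 h3
      have := hdown i j h1 h2 h3
      show q j - Q0 ≤ q i - Q0
      linarith
    have hkey := key_s6 N z c hc
      ((Finset.Icc 1 N).filter (fun n => q n - Q0 ≠ 0)).card (Q1 - Q0)
      (fun n => q n - Q0) hD le_rfl hbd ⟨p, hp1, hpN, hup', hdown'⟩
    have hexpand : ∑ n ∈ Finset.Icc 1 N, z n * (q n - Q0)
        = (∑ n ∈ Finset.Icc 1 N, z n * q n) - Q0 * ∑ n ∈ Finset.Icc 1 N, z n := by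
      rw [Finset.mul_sum, ← Finset.sum_sub_distrib]
      exact Finset.sum_congr rfl fun n _ => by ring
    rw [hexpand] at hkey
    rw [linLoss, hm]
    linarith
  · exact ⟨pr0.1, pr0.2, h01, h02, hrect0.symm⟩
  · rintro L ⟨a, b, h1, h2, rfl⟩
    rw [rect_eq z Q0 Q1 N a b h1 h2, hm]
    nlinarith [mul_le_mul_of_nonneg_left (hc a b h1 h2) hD]
end
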